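/- Let α, β, α', β' ∈ F and λ, λ' ∈ F* with Tr(αβ) = 1 and Tr(α'β') = 1, and suppose the conics C = {(0,x1,x2,x3) : α²x1² + x1x3 + β²x3² + λ²x2² = 0} and C' = {(0,x1,x2,x3) : α'²x1² + x1x3 + β'²x3² + λ'²x2² = 0} in the plane X0 = 0 of PG(3,q) are disjoint. Then the three conics K ∩ {λX0 + αX1 + (λ+1)X2 + βX3 = 0}, K ∩ {λ'X0 + α'X1 + (λ'+1)X2 + β'X3 = 0} and K ∩ {X0 + X2 = 0} are pairwise disjoint; hence the conic planes of a Mathon maximal arc together with the singular plane X0 + X2 = 0 define a partial flock of the cone K. -/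

import Mathlib

/-!
STATEMENT 9: The conic planes of a Mathon maximal arc together with the singular
plane define a partial flock of the cone.  If the plane conics
`C : α²x1² + x1x3 + β²x3² + λ²x2² = 0` and `C' : α'²x1² + x1x3 + β'²x3² + λ'²x2² = 0`
(in `X0 = 0`, with `Tr(αβ) = Tr(α'β') = 1`) are disjoint, then the conics cut on
the cone `K` by the conic planes `λX0 + αX1 + (λ+1)X2 + βX3 = 0`,
`λ'X0 + α'X1 + (λ'+1)X2 + β'X3 = 0` and by the singular plane `X0 + X2 = 0`
are pairwise disjoint.
-/

open Projectivization

noncomputable section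

abbrev F (h : ℕ) : Type := GaloisField 2 h

/-- The absolute trace map from `GF(2^h)` onto `GF(2)`. -/
def Tr {h : ℕ} (x : F h) : ZMod 2 := Algebra.trace (ZMod 2) (F h) x

/-- Points of the projective space `PG(3, 2^h)`. -/
abbrev Pt3 (h : ℕ) := Projectivization (F h) (Fin 4 → F h)

/-- The quadratic cone `K : X1X3 = X2²` with vertex `(1,0,0,0)`. -/
def cone {h : ℕ} : Set (Pt3 h) :=
  {P | P.rep 1 * P.rep 3 = P.rep 2 ^ 2}

/-- The plane `aX0 + bX1 + cX2 + dX3 = 0` of `PG(3,q)`. -/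
def planeSet {h : ℕ} (a b c d : F h) : Set (Pt3 h) :=
  {P | a * P.rep 0 + b * P.rep 1 + c * P.rep 2 + d * P.rep 3 = 0}

/-- The conic `{(0,x1,x2,x3) : α²x1² + x1x3 + β²x3² + λ²x2² = 0}` lying in the
plane `X0 = 0` of `PG(3,q)`. -/
def planeConic {h : ℕ} (α β lam : F h) : Set (Pt3 h) :=
  {P | P.rep 0 = 0 ∧
    α ^ 2 * P.rep 1 ^ 2 + P.rep 1 * P.rep 3 + β ^ 2 * P.rep 3 ^ 2 +
      lam ^ 2 * P.rep 2 ^ 2 = 0}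

-- Frobenius as a ZMod 2-algebra equiv
def frobAlg (h : ℕ) : F h ≃ₐ[ZMod 2] F h :=
  AlgEquiv.ofRingEquiv (f := frobeniusEquiv (F h) 2) (fun r => by
    have h1 : r ^ 2 = r := by revert r; decide
    show frobeniusEquiv (F h) 2 _ = _
    rw [frobeniusEquiv_def, ← map_pow, h1])

lemma Tr_sq {h : ℕ} (x : F h) : Tr (x ^ 2) = Tr x := by
  have := Algebra.trace_eq_of_algEquiv (frobAlg h) x
  simpa [Tr, frobAlg, frobeniusEquiv_def, frobenius_def] using this

lemma Tr_add {h : ℕ} (x y : F h) : Tr (x + y) = Tr x + Tr y := by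
  simp [Tr, map_add]

lemma lemA {h : ℕ} {α β x1 x3 : F h} (htr : Tr (α * β) = 1)
    (heq : α ^ 2 * x1 ^ 2 + x1 * x3 + β ^ 2 * x3 ^ 2 = 0) : x1 = 0 ∧ x3 = 0 := by
  have htwo : (2 : F h) = 0 := CharTwo.two_eq_zero
  have hα : α ≠ 0 := by
    rintro rfl; rw [zero_mul] at htr; simp [Tr] at htr
  have hβ : β ≠ 0 := by
    rintro rfl; rw [mul_zero] at htr; simp [Tr] at htr
  by_cases hx3 : x3 = 0
  · subst hx3
    constructor
    · have : (α * x1) ^ 2 = 0 := by linear_combination heq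
      have := pow_eq_zero_iff (n := 2) (by norm_num) |>.mp this
      exact (mul_eq_zero.mp this).resolve_left hα
    · rfl
  · exfalso
    set v := α ^ 2 * x1 * x3⁻¹ with hv
    have hveq : v ^ 2 + v = α ^ 2 * β ^ 2 := by
      have hi : x3 * x3⁻¹ = 1 := mul_inv_cancel₀ hx3
      rw [hv]
      linear_combination (α ^ 2 * x3⁻¹ ^ 2) * heq + (-α ^ 2 * x1 * x3⁻¹ - α ^ 2 * β ^ 2 * (x3 * x3⁻¹ + 1)) * hi - α ^ 2 * β ^ 2 * htwo
    have h1 : Tr (α ^ 2 * β ^ 2) = 1 := by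
      have : α ^ 2 * β ^ 2 = (α * β) ^ 2 := by ring
      rw [this, Tr_sq, htr]
    rw [← hveq, Tr_add, Tr_sq, CharTwo.add_self_eq_zero] at h1
    exact one_ne_zero h1.symm

-- key lemma B: membership data from cone ∩ conic plane
lemma lemB {h : ℕ} {α β lam : F h} {P : Pt3 h}
    (hc : P ∈ cone) (hp : P ∈ planeSet lam α (lam + 1) β) :
    α ^ 2 * P.rep 1 ^ 2 + P.rep 1 * P.rep 3 + β ^ 2 * P.rep 3 ^ 2 +
      lam ^ 2 * (P.rep 0 + P.rep 2) ^ 2 = 0 := by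
  have htwo : (2 : F h) = 0 := CharTwo.two_eq_zero
  have hcone : P.rep 1 * P.rep 3 = P.rep 2 ^ 2 := hc
  have hpl : lam * P.rep 0 + α * P.rep 1 + (lam + 1) * P.rep 2 + β * P.rep 3 = 0 := hp
  set x0 := P.rep 0; set x1 := P.rep 1; set x2 := P.rep 2; set x3 := P.rep 3
  have hS : α * x1 + lam * (x0 + x2) + β * x3 = -x2 := by linear_combination hpl
  linear_combination (α * x1 + lam * (x0 + x2) + β * x3 - x2) * hS + hcone +
    (x2 ^ 2 - (α * lam * x1 * (x0 + x2) + α * β * x1 * x3 + β * lam * x3 * (x0 + x2))) * htwo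

-- disjointness with the singular plane
lemma lemC {h : ℕ} {α β lam : F h} (htr : Tr (α * β) = 1) :
    Disjoint (cone ∩ planeSet lam α (lam + 1) β) (cone ∩ planeSet 1 0 1 0) := by
  rw [Set.disjoint_left]
  rintro P ⟨hc, hp⟩ ⟨-, hs⟩
  have hs' : P.rep 0 + P.rep 2 = 0 := by
    have : (1 : F h) * P.rep 0 + 0 * P.rep 1 + 1 * P.rep 2 + 0 * P.rep 3 = 0 := hs
    linear_combination this
  have hB := lemB hc hp
  rw [hs'] at hB
  have hB' : α ^ 2 * P.rep 1 ^ 2 + P.rep 1 * P.rep 3 + β ^ 2 * P.rep 3 ^ 2 = 0 := by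
    linear_combination hB
  obtain ⟨h1, h3⟩ := lemA htr hB'
  have hcone : P.rep 1 * P.rep 3 = P.rep 2 ^ 2 := hc
  have h2 : P.rep 2 = 0 := by
    have : P.rep 2 ^ 2 = 0 := by rw [← hcone, h1, zero_mul]
    exact pow_eq_zero_iff (n := 2) (by norm_num) |>.mp this
  have h0 : P.rep 0 = 0 := by rw [h2, add_zero] at hs'; exact hs'
  apply P.rep_nonzero
  funext i
  fin_cases i <;> assumption

theorem stmt9 (h : ℕ) (hh : h ≠ 0) (α β α' β' lam lam' : F h)
    (hlam : lam ≠ 0) (hlam' : lam' ≠ 0)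
    (htr : Tr (α * β) = 1) (htr' : Tr (α' * β') = 1)
    (hdisj : Disjoint (planeConic α β lam) (planeConic α' β' lam')) :
    Disjoint (cone ∩ planeSet lam α (lam + 1) β)
      (cone ∩ planeSet lam' α' (lam' + 1) β') ∧
    Disjoint (cone ∩ planeSet lam α (lam + 1) β)
      (cone ∩ planeSet 1 0 1 0) ∧
    Disjoint (cone ∩ planeSet lam' α' (lam' + 1) β')
      (cone ∩ planeSet 1 0 1 0) := by
  refine ⟨?_, lemC htr, lemC htr'⟩
  rw [Set.disjoint_left]
  rintro P ⟨hc, hp⟩ ⟨-, hp'⟩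
  have hB := lemB hc hp
  have hB' := lemB hc hp'
  set x0 := P.rep 0; set x1 := P.rep 1; set x2 := P.rep 2; set x3 := P.rep 3
  have hcone : x1 * x3 = x2 ^ 2 := hc
  set w : Fin 4 → F h := ![0, x1, x0 + x2, x3] with hwdef
  have hw : w ≠ 0 := by
    intro hzero
    have e1 : x1 = 0 := congrFun hzero 1
    have e3 : x3 = 0 := congrFun hzero 3
    have e2 : x2 = 0 := by
      have : x2 ^ 2 = 0 := by rw [← hcone, e1, zero_mul]
      exact pow_eq_zero_iff (n := 2) (by norm_num) |>.mp this
    have e0 : x0 = 0 := by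
      have : x0 + x2 = 0 := congrFun hzero 2
      rwa [e2, add_zero] at this
    apply P.rep_nonzero
    funext i
    fin_cases i <;> assumption
  set Q : Pt3 h := Projectivization.mk (F h) w hw with hQ
  obtain ⟨a, ha⟩ := Projectivization.exists_smul_eq_mk_rep (F h) w hw
  have e0 : Q.rep 0 = (a : F h) * 0 := by rw [← ha]; rfl
  have e1 : Q.rep 1 = (a : F h) * x1 := by rw [← ha]; rfl
  have e2 : Q.rep 2 = (a : F h) * (x0 + x2) := by rw [← ha]; rfl
  have e3 : Q.rep 3 = (a : F h) * x3 := by rw [← ha]; rfl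
  have hQC : Q ∈ planeConic α β lam := by
    refine ⟨by rw [e0, mul_zero], ?_⟩
    rw [e1, e2, e3]
    linear_combination (a : F h) ^ 2 * hB
  have hQC' : Q ∈ planeConic α' β' lam' := by
    refine ⟨by rw [e0, mul_zero], ?_⟩
    rw [e1, e2, e3]
    linear_combination (a : F h) ^ 2 * hB'
  exact Set.disjoint_left.mp hdisj hQC hQC'

end
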